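/- In the stochastic tabular setting, if a policy π₁* maximizes R̄₁ over all policies (i.e., R̄₁(π) ≤ R̄₁(π₁*) for every policy π), then π₁* is constrained within the support of the behavior policy at every state in the support of d: for every s with d(s) > 0 and every action a, π₁*(a|s) > 0 implies β(a|s) > 0. -/

import Mathlib

open scoped BigOperators Classical

/-- Extended-real logarithm of a (nonnegative) real number, with `elog 0 = ⊥` (i.e. `log 0 = -∞`).
Note that in `EReal` we have `0 * ⊥ = 0`, matching the convention `0·(−∞) = 0`. -/
noncomputable def elog (x : ℝ) : EReal := if x = 0 then ⊥ else ((Real.log x : ℝ) : EReal)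

lemma ecoe_sum {ι : Type*} (s : Finset ι) (f : ι → ℝ) :
    ((∑ i ∈ s, f i : ℝ) : EReal) = ∑ i ∈ s, ((f i : ℝ) : EReal) :=
  map_sum (⟨⟨Real.toEReal, EReal.coe_zero⟩, EReal.coe_add⟩ : ℝ →+ EReal) f s

lemma coe_mul_elog (c x : ℝ) (h : x = 0 → c = 0) :
    (c : EReal) * elog x = (((if x = 0 then 0 else c * Real.log x) : ℝ) : EReal) := by
  unfold elog
  by_cases hx : x = 0
  · simp [hx, h hx]
  · simp only [hx, if_false, ← EReal.coe_mul]

lemma elog_ne_top (x : ℝ) : elog x ≠ ⊤ := by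
  unfold elog; split <;> simp

lemma coe_mul_ne_top {r : ℝ} {x : EReal} (hr : 0 ≤ r) (hx : x ≠ ⊤) :
    (r : EReal) * x ≠ ⊤ := by
  induction x using EReal.rec with
  | bot =>
    rcases eq_or_lt_of_le hr with h | h
    · simp [← h]
    · simp [EReal.coe_mul_bot_of_pos h]
  | coe y => rw [← EReal.coe_mul]; exact EReal.coe_ne_top _
  | top => exact absurd rfl hx

lemma esum_ne_top {ι : Type*} {s : Finset ι} {f : ι → EReal}
    (h : ∀ i ∈ s, f i ≠ ⊤) : ∑ i ∈ s, f i ≠ ⊤ := by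
  classical
  induction s using Finset.induction_on with
  | empty => simp
  | insert _ _ hi ih =>
    rw [Finset.sum_insert hi]
    exact (EReal.add_lt_top (h _ (Finset.mem_insert_self _ _))
      (ih fun j hj => h j (Finset.mem_insert_of_mem hj))).ne

lemma esum_ne_bot {ι : Type*} {s : Finset ι} {f : ι → EReal}
    (h : ∑ i ∈ s, f i ≠ ⊥) {i : ι} (hi : i ∈ s) : f i ≠ ⊥ := by
  intro hib
  exact h (by rw [← Finset.add_sum_erase _ f hi, hib, EReal.bot_add])

/-- The regularizer
`R̄₁(π) = Σ_s d(s)·Σ_{s'} N(s'|s)·exp(α(V(s')−V(s)))·log(Σ_a M(s'|s,a)·π(a|s))`,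
valued in the extended reals. -/
noncomputable def Rbar1Sto {S A : Type*} [Fintype S] [Fintype A]
    (d : S → ℝ) (N : S → S → ℝ) (V : S → ℝ) (α : ℝ)
    (M : S → A → S → ℝ) (π : S → A → ℝ) : EReal :=
  ∑ s, (d s : EReal) *
    ∑ s', ((N s s' * Real.exp (α * (V s' - V s)) : ℝ) : EReal) *
      elog (∑ a, M s a s' * π s a)

/-- in the stochastic tabular setting, any policy maximizing `R̄₁` over all
policies is constrained within the support of the behavior policy at every state in the
support of `d`. -/
theorem stmt17 {S A : Type*} [Fintype S] [Fintype A] [Nonempty S] [Nonempty A]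
    (d : S → ℝ) (hd0 : ∀ s, 0 ≤ d s) (hd1 : ∑ s, d s = 1)
    (β : S → A → ℝ) (hβ0 : ∀ s a, 0 ≤ β s a) (hβ1 : ∀ s, ∑ a, β s a = 1)
    (M : S → A → S → ℝ) (hM0 : ∀ s a s', 0 ≤ M s a s')
    (hMzero : ∀ s a, β s a = 0 → ∀ s', M s a s' = 0)
    (hMpmf : ∀ s a, 0 < β s a → ∑ s', M s a s' = 1)
    (N : S → S → ℝ) (hN : ∀ s s', N s s' = ∑ a, β s a * M s a s')
    (V : S → ℝ) (α : ℝ)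
    (πst : S → A → ℝ) (hπst0 : ∀ s a, 0 ≤ πst s a) (hπst1 : ∀ s, ∑ a, πst s a = 1)
    (hmax : ∀ π : S → A → ℝ, (∀ s a, 0 ≤ π s a) → (∀ s, ∑ a, π s a = 1) →
      Rbar1Sto d N V α M π ≤ Rbar1Sto d N V α M πst) :
    ∀ s, 0 < d s → ∀ a, 0 < πst s a → 0 < β s a := by
  intro s₀ hds₀ a₀ hπa₀
  by_contra hβa₀'
  have hβa₀ : β s₀ a₀ = 0 := le_antisymm (not_lt.mp hβa₀') (hβ0 s₀ a₀)
  have hN0 : ∀ s s', 0 ≤ N s s' := by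
    intro s s'; rw [hN]
    exact Finset.sum_nonneg fun a _ => mul_nonneg (hβ0 s a) (hM0 s a s')
  -- coefficient
  set C : S → S → ℝ := fun s s' => N s s' * Real.exp (α * (V s' - V s)) with hC
  have hC0 : ∀ s s', 0 ≤ C s s' := fun s s' =>
    mul_nonneg (hN0 s s') (Real.exp_pos _).le
  have hCpos : ∀ s s', N s s' ≠ 0 → 0 < C s s' := fun s s' h =>
    mul_pos (lt_of_le_of_ne (hN0 s s') (Ne.symm h)) (Real.exp_pos _)
  have hCzero : ∀ s s', N s s' = 0 → C s s' = 0 := fun s s' h => by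
    simp [hC, h]
  -- Rbar of β is a real number
  have hβg : ∀ s s', (∑ a, M s a s' * β s a) = N s s' := by
    intro s s'; rw [hN]; exact Finset.sum_congr rfl fun a _ => mul_comm _ _
  have hβcoe : Rbar1Sto d N V α M β =
      (((∑ s, d s * ∑ s', if N s s' = 0 then 0 else C s s' * Real.log (N s s')) : ℝ) : EReal) := by
    unfold Rbar1Sto
    rw [ecoe_sum]
    refine Finset.sum_congr rfl fun s _ => ?_
    rw [EReal.coe_mul]
    congr 1
    rw [ecoe_sum]
    refine Finset.sum_congr rfl fun s' _ => ?_
    rw [hβg s s', coe_mul_elog _ _ (hCzero s s')]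
  -- Rbar of πst is not ⊥
  have hnb : Rbar1Sto d N V α M πst ≠ ⊥ := by
    intro h
    have := hmax β hβ0 hβ1
    rw [hβcoe, h, le_bot_iff] at this
    exact EReal.coe_ne_bot _ this
  -- key positivity fact
  have hP : ∀ s, 0 < d s → ∀ s', N s s' ≠ 0 → 0 < ∑ a, M s a s' * πst s a := by
    intro s hds s' hNs
    have h1 : (d s : EReal) * ∑ s', ((C s s' : ℝ) : EReal) * elog (∑ a, M s a s' * πst s a) ≠ ⊥ :=
      esum_ne_bot hnb (Finset.mem_univ s)
    have h2 : (∑ s', ((C s s' : ℝ) : EReal) * elog (∑ a, M s a s' * πst s a)) ≠ ⊥ := by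
      intro hb
      rw [hb, EReal.mul_bot_of_pos (by exact_mod_cast hds)] at h1
      exact h1 rfl
    have h3 : ((C s s' : ℝ) : EReal) * elog (∑ a, M s a s' * πst s a) ≠ ⊥ :=
      esum_ne_bot h2 (Finset.mem_univ s')
    by_contra hg
    have hg0 : (∑ a, M s a s' * πst s a) = 0 :=
      le_antisymm (not_lt.mp hg)
        (Finset.sum_nonneg fun a _ => mul_nonneg (hM0 s a s') (hπst0 s a))
    rw [show elog (∑ a, M s a s' * πst s a) = ⊥ by simp [elog, hg0],
      EReal.mul_bot_of_pos (by exact_mod_cast hCpos s s' hNs)] at h3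
    exact h3 rfl
  -- mask lemma : g = 0 → C = 0 at states with d > 0
  have hmask : ∀ s, 0 < d s → ∀ s', (∑ a, M s a s' * πst s a) = 0 → C s s' = 0 := by
    intro s hds s' hg
    by_contra hc
    have hNs : N s s' ≠ 0 := fun h => hc (hCzero s s' h)
    exact absurd hg (ne_of_gt (hP s hds s' hNs))
  -- pick a₁ with β s₀ a₁ > 0
  obtain ⟨a₁, ha₁⟩ : ∃ a, 0 < β s₀ a := by
    by_contra h; push_neg at h
    have : (∑ a, β s₀ a) = 0 :=
      Finset.sum_eq_zero fun a _ => le_antisymm (h a) (hβ0 s₀ a)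
    rw [hβ1 s₀] at this; norm_num at this
  obtain ⟨s₁, hs₁⟩ : ∃ s', 0 < M s₀ a₁ s' := by
    by_contra h; push_neg at h
    have : (∑ s', M s₀ a₁ s') = 0 :=
      Finset.sum_eq_zero fun s' _ => le_antisymm (h s') (hM0 s₀ a₁ s')
    rw [hMpmf s₀ a₁ ha₁] at this; norm_num at this
  have hNs₁ : 0 < N s₀ s₁ := by
    rw [hN]
    refine lt_of_lt_of_le (mul_pos ha₁ hs₁) ?_
    exact Finset.single_le_sum (fun a _ => mul_nonneg (hβ0 s₀ a) (hM0 s₀ a s₁))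
      (Finset.mem_univ a₁)
  have ha01 : a₀ ≠ a₁ := fun h => hβa₀' (h ▸ ha₁)
  -- the improved policy
  set cc : ℝ := πst s₀ a₀ with hccdef
  set π' : S → A → ℝ := fun s a =>
    if s = s₀ then (if a = a₀ then 0 else if a = a₁ then πst s₀ a₁ + cc else πst s₀ a)
    else πst s a with hπ'def
  have hπ'0 : ∀ s a, 0 ≤ π' s a := by
    intro s a
    simp only [hπ'def]
    split
    · split
      · exact le_refl 0
      · split
        · exact add_nonneg (hπst0 s₀ a₁) (hπst0 s₀ a₀)
        · exact hπst0 s₀ a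
    · exact hπst0 s a
  have hπptw : ∀ a, π' s₀ a =
      πst s₀ a + (if a = a₁ then cc else 0) - (if a = a₀ then cc else 0) := by
    intro a
    simp only [hπ'def, if_pos rfl]
    by_cases h0 : a = a₀
    · subst h0; simp [if_neg ha01, hccdef]
    · by_cases h1 : a = a₁ <;> simp [h0, h1, Ne.symm ha01] <;> ring
  have hπ'1 : ∀ s, ∑ a, π' s a = 1 := by
    intro s
    by_cases hs : s = s₀
    · subst hs
      rw [Finset.sum_congr rfl fun a _ => hπptw a]
      rw [Finset.sum_sub_distrib, Finset.sum_add_distrib,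
        Finset.sum_ite_eq' Finset.univ a₁ (fun _ => cc),
        Finset.sum_ite_eq' Finset.univ a₀ (fun _ => cc)]
      simp [hπst1]
    · simp only [hπ'def, if_neg hs]; exact hπst1 s
  -- the new g
  have hg' : ∀ s', (∑ a, M s₀ a s' * π' s₀ a)
      = (∑ a, M s₀ a s' * πst s₀ a) + cc * M s₀ a₁ s' := by
    intro s'
    have hM₀ : M s₀ a₀ s' = 0 := hMzero s₀ a₀ hβa₀ s'
    have step : ∀ a, M s₀ a s' * π' s₀ a
        = M s₀ a s' * πst s₀ a + (if a = a₁ then M s₀ a s' * cc else 0)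
          - (if a = a₀ then M s₀ a s' * cc else 0) := by
      intro a
      rw [hπptw a]
      by_cases h1 : a = a₁ <;> by_cases h0 : a = a₀ <;>
        simp [h1, h0, ha01, Ne.symm ha01] <;> ring
    rw [Finset.sum_congr rfl fun a _ => step a, Finset.sum_sub_distrib,
      Finset.sum_add_distrib, Finset.sum_ite_eq' Finset.univ a₁ _,
      Finset.sum_ite_eq' Finset.univ a₀ _]
    simp [hM₀, mul_comm]
  -- nonnegativity of g
  have hgnn : ∀ s', 0 ≤ ∑ a, M s₀ a s' * πst s₀ a := fun s' =>
    Finset.sum_nonneg fun a _ => mul_nonneg (hM0 s₀ a s') (hπst0 s₀ a)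
  -- masked real forms of the inner sums at s₀
  have hT : (∑ s', ((C s₀ s' : ℝ) : EReal) * elog (∑ a, M s₀ a s' * πst s₀ a))
      = (((∑ s', if (∑ a, M s₀ a s' * πst s₀ a) = 0 then 0
          else C s₀ s' * Real.log (∑ a, M s₀ a s' * πst s₀ a)) : ℝ) : EReal) := by
    rw [ecoe_sum]
    exact Finset.sum_congr rfl fun s' _ =>
      coe_mul_elog _ _ (hmask s₀ hds₀ s')
  have hT' : (∑ s', ((C s₀ s' : ℝ) : EReal) * elog (∑ a, M s₀ a s' * π' s₀ a))
      = (((∑ s', if ((∑ a, M s₀ a s' * πst s₀ a) + cc * M s₀ a₁ s') = 0 then 0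
          else C s₀ s' * Real.log ((∑ a, M s₀ a s' * πst s₀ a) + cc * M s₀ a₁ s')) : ℝ) : EReal) := by
    rw [ecoe_sum]
    refine Finset.sum_congr rfl fun s' _ => ?_
    rw [hg' s']
    refine coe_mul_elog _ _ fun h0 => hmask s₀ hds₀ s' ?_
    have h1 : 0 ≤ cc * M s₀ a₁ s' := mul_nonneg hπa₀.le (hM0 s₀ a₁ s')
    linarith [hgnn s']
  -- the strict inequality between the masked sums
  have hlt : (∑ s', if (∑ a, M s₀ a s' * πst s₀ a) = 0 then 0
        else C s₀ s' * Real.log (∑ a, M s₀ a s' * πst s₀ a))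
      < (∑ s', if ((∑ a, M s₀ a s' * πst s₀ a) + cc * M s₀ a₁ s') = 0 then 0
        else C s₀ s' * Real.log ((∑ a, M s₀ a s' * πst s₀ a) + cc * M s₀ a₁ s')) := by
    refine Finset.sum_lt_sum (fun s' _ => ?_) ⟨s₁, Finset.mem_univ s₁, ?_⟩
    · by_cases hNz : N s₀ s' = 0
      · have hCz : C s₀ s' = 0 := hCzero s₀ s' hNz
        split_ifs <;> simp [hCz]
      · have hgpos := hP s₀ hds₀ s' hNz
        have hmnn : 0 ≤ cc * M s₀ a₁ s' := mul_nonneg hπa₀.le (hM0 s₀ a₁ s')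
        rw [if_neg hgpos.ne', if_neg (by positivity)]
        exact mul_le_mul_of_nonneg_left
          (Real.log_le_log hgpos (le_add_of_nonneg_right hmnn)) (hC0 s₀ s')
    · have hgpos := hP s₀ hds₀ s₁ hNs₁.ne'
      have hmpos : 0 < cc * M s₀ a₁ s₁ := mul_pos hπa₀ hs₁
      rw [if_neg hgpos.ne', if_neg (by positivity)]
      exact mul_lt_mul_of_pos_left
        (Real.log_lt_log hgpos (lt_add_of_pos_right _ hmpos)) (hCpos s₀ s₁ hNs₁.ne')
  -- split off the s₀ term from the regularizer
  have hsplit : ∀ π : S → A → ℝ, Rbar1Sto d N V α M π =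
      (d s₀ : EReal) * (∑ s', ((C s₀ s' : ℝ) : EReal) * elog (∑ a, M s₀ a s' * π s₀ a))
      + ∑ s ∈ Finset.univ.erase s₀,
          (d s : EReal) * ∑ s', ((C s s' : ℝ) : EReal) * elog (∑ a, M s a s' * π s a) := by
    intro π
    exact (Finset.add_sum_erase _
      (fun s => (d s : EReal) * ∑ s', ((C s s' : ℝ) : EReal) * elog (∑ a, M s a s' * π s a))
      (Finset.mem_univ s₀)).symm
  have hrest_eq : (∑ s ∈ Finset.univ.erase s₀,
        (d s : EReal) * ∑ s', ((C s s' : ℝ) : EReal) * elog (∑ a, M s a s' * π' s a))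
      = ∑ s ∈ Finset.univ.erase s₀,
        (d s : EReal) * ∑ s', ((C s s' : ℝ) : EReal) * elog (∑ a, M s a s' * πst s a) := by
    refine Finset.sum_congr rfl fun s hs => ?_
    have hs' : s ≠ s₀ := Finset.ne_of_mem_erase hs
    congr 1
    refine Finset.sum_congr rfl fun s' _ => ?_
    congr 2
    exact Finset.sum_congr rfl fun a _ => by simp [hπ'def, hs']
  set R : EReal := ∑ s ∈ Finset.univ.erase s₀,
      (d s : EReal) * ∑ s', ((C s s' : ℝ) : EReal) * elog (∑ a, M s a s' * πst s a) with hRdef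
  have hRtop : R ≠ ⊤ :=
    esum_ne_top fun s _ => coe_mul_ne_top (hd0 s)
      (esum_ne_top fun s' _ => coe_mul_ne_top (hC0 s s') (elog_ne_top _))
  have hRbot : R ≠ ⊥ := by
    intro hb
    apply hnb
    rw [hsplit πst, hT, ← hRdef, hb, ← EReal.coe_mul, EReal.add_bot]
  obtain ⟨r, hr⟩ : ∃ r : ℝ, R = (r : EReal) :=
    ⟨R.toReal, (EReal.coe_toReal hRtop hRbot).symm⟩
  have key := hmax π' hπ'0 hπ'1
  rw [hsplit π', hsplit πst, hT, hT', hrest_eq, ← hRdef, hr, ← EReal.coe_mul,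
    ← EReal.coe_mul, ← EReal.coe_add, ← EReal.coe_add, EReal.coe_le_coe_iff] at key
  nlinarith [mul_lt_mul_of_pos_left hlt hds₀]
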